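/- Let λ, μ, β, γ > 0 and suppose functions s, i, r, l_c, l_d : ℝ → ℝ satisfy s' = −β(l_c + l_d)·s, i' = β(l_c+l_d)·s − γ·i, r' = γ·i, l_c' = (λβ/μ)(l_c+l_d)·s − (μ+β+γ)·l_c, and l_d' = μ·l_c − γ·l_d. Then l := l_c + l_d satisfies l' = (βλ/μ)·l·s + λ·i − (β+μ+γ)·l, provided the constraint (λ/μ)·i = l_c + l_d + (β/μ)·l_d holds. -/

import Mathlib

/-- The two-component active-edge ODE system collapses, under the constraint
`(λ/μ) i = l_c + l_d + (β/μ) l_d`, to the single novel ODE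
`l' = (βλ/μ) l s + λ i − (β+μ+γ) l` for `l = l_c + l_d`. -/
theorem stmt12 (lam μ β γ : ℝ) (hlam : 0 < lam) (hμ : 0 < μ) (hβ : 0 < β) (hγ : 0 < γ)
    (s i r lc ld : ℝ → ℝ)
    (hs : ∀ t, HasDerivAt s (-β * (lc t + ld t) * s t) t)
    (hi : ∀ t, HasDerivAt i (β * (lc t + ld t) * s t - γ * i t) t)
    (hr : ∀ t, HasDerivAt r (γ * i t) t)
    (hlc : ∀ t, HasDerivAt lc ((lam * β / μ) * (lc t + ld t) * s t - (μ + β + γ) * lc t) t)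
    (hld : ∀ t, HasDerivAt ld (μ * lc t - γ * ld t) t)
    (hconstraint : ∀ t, (lam / μ) * i t = lc t + ld t + (β / μ) * ld t) :
    ∀ t, HasDerivAt (fun t => lc t + ld t)
      ((β * lam / μ) * (lc t + ld t) * s t + lam * i t - (β + μ + γ) * (lc t + ld t)) t := by
  intro t
  have h := (hlc t).add (hld t)
  have hc := hconstraint t
  have hμ' : μ ≠ 0 := ne_of_gt hμ
  refine h.congr_deriv ?_
  field_simp at hc ⊢
  ring_nf at hc ⊢
  nlinarith [hc]
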